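/- arXiv:1302.1986 — 4 statements merged into one kernel-verified Lean document; each statement's English description precedes it below -/
import Mathlib

section
/- Let F(x) = Σ_{n≥1} f(n)x^n be a formal power series over ℚ with integer coefficients and f(1) = 1, and let A(x) be the unique formal power series over ℚ with zero constant term and linear coefficient 1 satisfying A(A(x)) = F(x). Then for all 1 ≤ k ≤ n, the rational number 4^{n−k} · A^Δ(n,k) is an integer, where A^Δ(n,k) = [x^n]A(x)^k. -/
open PowerSeries Finset

/-- Composition `G(A(x))` of formal power series, valid when `A` has zero
constant term. -/
noncomputable def PSComp (G A : PowerSeries ℚ) : PowerSeries ℚ :=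
  PowerSeries.mk fun n => ∑ m ∈ range (n + 1), coeff m G * coeff n (A ^ m)

section Aux

variable {A : PowerSeries ℚ}

lemma coeff_pow_eq_zero (hA0 : constantCoeff A = 0) :
    ∀ {k j : ℕ}, j < k → coeff j (A ^ k) = 0 := by
  intro k
  induction k with
  | zero => intro j h; omega
  | succ k ih =>
    intro j hj
    rw [pow_succ, coeff_mul]
    apply Finset.sum_eq_zero
    rintro ⟨p, q⟩ hpq
    rw [Finset.HasAntidiagonal.mem_antidiagonal] at hpq
    rcases Nat.eq_zero_or_pos q with hq | hq
    · subst hq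
      simp [coeff_zero_eq_constantCoeff, hA0]
    · have hp : p < k := by omega
      rw [ih hp, zero_mul]

lemma coeff_pow_self (hA0 : constantCoeff A = 0) (hA1 : coeff 1 A = 1) :
    ∀ n, coeff n (A ^ n) = 1 := by
  intro n
  induction n with
  | zero => simp
  | succ n ih =>
    rw [pow_succ, coeff_mul]
    rw [Finset.sum_eq_single (n, 1)]
    · rw [ih, hA1, one_mul]
    · rintro ⟨p, q⟩ hpq hne
      rw [Finset.HasAntidiagonal.mem_antidiagonal] at hpq
      rcases lt_or_ge p n with h | h
      · rw [coeff_pow_eq_zero hA0 h, zero_mul]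
      · have hq : q = 0 := by
          by_contra hq0
          have h2 : p = n ∧ q = 1 := by omega
          exact hne (by simp [h2.1, h2.2])
        subst hq
        simp [coeff_zero_eq_constantCoeff, hA0]
    · intro h
      exact absurd (Finset.HasAntidiagonal.mem_antidiagonal.mpr (by omega)) h

lemma coeff_aeval (hA0 : constantCoeff A = 0) (p : Polynomial ℚ) (n : ℕ) :
    coeff n (Polynomial.aeval A p) =
      ∑ i ∈ range (n + 1), p.coeff i * coeff n (A ^ i) := by
  set N := max (p.natDegree + 1) (n + 1) with hN
  have hdeg : p.natDegree < N := lt_of_lt_of_le (Nat.lt_succ_self _) (le_max_left _ _)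
  rw [Polynomial.aeval_eq_sum_range' hdeg, map_sum]
  have h1 : ∀ i ∈ range N, coeff n (p.coeff i • A ^ i)
      = p.coeff i * coeff n (A ^ i) := by
    intro i _
    rw [LinearMap.map_smul, smul_eq_mul]
  rw [Finset.sum_congr rfl h1]
  symm
  apply Finset.sum_subset
  · exact Finset.range_subset_range.mpr (le_max_right _ _)
  · intro i _ hi
    rw [Finset.mem_range, not_lt] at hi
    rw [coeff_pow_eq_zero hA0 (by omega), mul_zero]

lemma coeff_PSComp_eq_aeval (hA0 : constantCoeff A = 0) (G : PowerSeries ℚ)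
    {p N : ℕ} (h : p < N) :
    coeff p (PSComp G A) = coeff p (Polynomial.aeval A (trunc N G)) := by
  rw [PSComp, coeff_mk, coeff_aeval hA0]
  apply Finset.sum_congr rfl
  intro i hi
  rw [Finset.mem_range] at hi
  rw [coeff_trunc, if_pos (by omega)]

lemma PSComp_mul (hA0 : constantCoeff A = 0) (G H : PowerSeries ℚ) :
    PSComp (G * H) A = PSComp G A * PSComp H A := by
  ext n
  rw [coeff_mul]
  have hGH : ∀ pq : ℕ × ℕ, pq ∈ antidiagonal n →
      coeff pq.1 (PSComp G A) * coeff pq.2 (PSComp H A)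
      = coeff pq.1 (Polynomial.aeval A (trunc (n+1) G)) *
        coeff pq.2 (Polynomial.aeval A (trunc (n+1) H)) := by
    rintro ⟨p, q⟩ hpq
    rw [Finset.HasAntidiagonal.mem_antidiagonal] at hpq
    rw [coeff_PSComp_eq_aeval hA0 G (by omega : p < n+1),
      coeff_PSComp_eq_aeval hA0 H (by omega : q < n+1)]
  rw [Finset.sum_congr rfl hGH, ← coeff_mul, ← map_mul]
  rw [coeff_aeval hA0, PSComp, coeff_mk]
  apply Finset.sum_congr rfl
  intro i hi
  rw [Finset.mem_range] at hi
  congr 1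
  rw [Polynomial.coeff_mul, coeff_mul]
  apply Finset.sum_congr rfl
  rintro ⟨a, b⟩ hab
  rw [Finset.HasAntidiagonal.mem_antidiagonal] at hab
  rw [coeff_trunc, coeff_trunc, if_pos (by omega), if_pos (by omega)]

lemma PSComp_pow (hA0 : constantCoeff A = 0) (k : ℕ) :
    PSComp (A ^ k) A = (PSComp A A) ^ k := by
  induction k with
  | zero =>
    simp only [pow_zero]
    ext n
    rw [PSComp, coeff_mk]
    rw [Finset.sum_eq_single 0]
    · simp
    · intro m _ hm0; rw [coeff_one, if_neg hm0, zero_mul]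
    · intro h; simp at h
  | succ k ih =>
    rw [pow_succ, pow_succ, PSComp_mul hA0, ih]

lemma coeff_F_pow_int (F : PowerSeries ℚ) (hFint : ∀ n, ∃ m : ℤ, coeff n F = m) :
    ∀ k n, coeff n (F ^ k) ∈ (⊥ : Subring ℚ) := by
  intro k
  induction k with
  | zero =>
    intro n
    rw [pow_zero, coeff_one]
    split
    · exact Subring.one_mem _
    · exact Subring.zero_mem _
  | succ k ih =>
    intro n
    rw [pow_succ, coeff_mul]
    apply Subring.sum_mem
    rintro ⟨p, q⟩ _
    apply Subring.mul_mem _ (ih p)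
    obtain ⟨m, hm⟩ := hFint q
    exact Subring.mem_bot.mpr ⟨m, hm.symm⟩

lemma two_pow_mem (t : ℕ) : (2:ℚ) ^ t ∈ (⊥ : Subring ℚ) := by
  apply Subring.pow_mem
  exact Subring.mem_bot.mpr ⟨2, by norm_num⟩

lemma main_rec (hA0 : constantCoeff A = 0) (hA1 : coeff 1 A = 1)
    (F : PowerSeries ℚ) (hFint : ∀ n, ∃ m : ℤ, coeff n F = m)
    (hAF : PSComp A A = F) :
    ∀ d, 0 < d → ∀ k, 1 ≤ k →
      (2:ℚ) ^ (2*d - 1) * coeff (k + d) (A ^ k) ∈ (⊥ : Subring ℚ) := by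
  intro d
  induction d using Nat.strong_induction_on with
  | _ d ih =>
    intro hd k hk
    set n := k + d with hn
    have hkn : k < n := by omega
    set t : ℕ → ℚ := fun j => coeff j (A ^ k) * coeff n (A ^ j) with ht
    have hkey : coeff n (F ^ k) = ∑ j ∈ range (n+1), t j := by
      rw [← hAF, ← PSComp_pow hA0, PSComp, coeff_mk]
    have hsub : ∑ j ∈ range (n+1), t j = ∑ j ∈ Finset.Icc k n, t j := by
      symm
      apply Finset.sum_subset
      · intro j hj
        rw [Finset.mem_Icc] at hj
        rw [Finset.mem_range]; omega
      · intro j hj hj2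
        rw [Finset.mem_range] at hj
        rw [Finset.mem_Icc] at hj2
        rw [ht]
        simp only
        rw [coeff_pow_eq_zero hA0 (by omega), zero_mul]
    have e1 : ∑ j ∈ Finset.Icc k n, t j = t k + ∑ j ∈ Finset.Ioc k n, t j := by
      rw [← Finset.Icc_erase_left,
        Finset.add_sum_erase _ t (Finset.mem_Icc.mpr ⟨le_refl k, by omega⟩)]
    have e2 : ∑ j ∈ Finset.Ioc k n, t j = t n + ∑ j ∈ Finset.Ioo k n, t j := by
      rw [← Finset.Ioc_erase_right,
        Finset.add_sum_erase _ t (Finset.mem_Ioc.mpr ⟨hkn, le_refl n⟩)]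
    have htk : t k = coeff n (A ^ k) := by
      rw [ht]; simp only
      rw [coeff_pow_self hA0 hA1, one_mul]
    have htn : t n = coeff n (A ^ k) := by
      rw [ht]; simp only
      rw [coeff_pow_self hA0 hA1, mul_one]
    have hEq : 2 * coeff n (A ^ k)
        = coeff n (F ^ k) - ∑ j ∈ Finset.Ioo k n, t j := by
      rw [hkey, hsub, e1, e2, htk, htn]; ring
    have hsplit : (2:ℚ) ^ (2*d - 1) * coeff n (A ^ k)
        = (2:ℚ) ^ (2*d - 2) * coeff n (F ^ k)
          - ∑ j ∈ Finset.Ioo k n, (2:ℚ) ^ (2*d - 2) * t j := by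
      rw [← Finset.mul_sum, ← mul_sub, ← hEq, ← mul_assoc]
      congr 1
      rw [show 2*d - 1 = (2*d - 2) + 1 by omega, pow_succ]
    rw [hsplit]
    apply Subring.sub_mem
    · exact Subring.mul_mem _ (two_pow_mem _) (coeff_F_pow_int F hFint k n)
    · apply Subring.sum_mem
      intro j hj
      rw [Finset.mem_Ioo] at hj
      set d1 := j - k with hd1
      set d2 := n - j with hd2
      have hj1 : j = k + d1 := by omega
      have hj2 : n = j + d2 := by omega
      have hdd : d1 + d2 = d := by omega
      have hpow : (2:ℚ) ^ (2*d - 2) = 2 ^ (2*d1 - 1) * 2 ^ (2*d2 - 1) := by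
        rw [← pow_add]
        congr 1
        omega
      have hterm : (2:ℚ) ^ (2*d - 2) * t j
          = ((2:ℚ) ^ (2*d1 - 1) * coeff j (A ^ k))
            * ((2:ℚ) ^ (2*d2 - 1) * coeff n (A ^ j)) := by
        rw [hpow, ht]; ring
      rw [hterm]
      apply Subring.mul_mem
      · have := ih d1 (by omega) (by omega) k hk
        rwa [← hj1] at this
      · have := ih d2 (by omega) (by omega) j (by omega)
        rwa [← hj2] at this

end Aux

theorem stmt_11 (F : PowerSeries ℚ) (hF0 : constantCoeff F = 0)
    (hFint : ∀ n, ∃ m : ℤ, coeff n F = m) (hF1 : coeff 1 F = 1)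
    (A : PowerSeries ℚ) (hA0 : constantCoeff A = 0) (hA1 : coeff 1 A = 1)
    (hAF : PSComp A A = F) (n k : ℕ) (hk : 1 ≤ k) (hkn : k ≤ n) :
    ∃ m : ℤ, (4 : ℚ) ^ (n - k) * coeff n (A ^ k) = m := by
  rcases eq_or_lt_of_le hkn with heq | hlt
  · subst heq
    refine ⟨1, ?_⟩
    rw [coeff_pow_self hA0 hA1, Nat.sub_self, pow_zero, one_mul]
    norm_num
  · set d := n - k with hd
    have hd1 : 0 < d := by omega
    have hmem := main_rec hA0 hA1 F hFint hAF d hd1 k hk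
    have hkd : k + d = n := by omega
    rw [hkd, Subring.mem_bot] at hmem
    obtain ⟨m, hm⟩ := hmem
    refine ⟨2 * m, ?_⟩
    have h4 : (4:ℚ) ^ d = 2 * 2 ^ (2*d - 1) := by
      have h42 : (4:ℚ) = 2^2 := by norm_num
      rw [h42, ← pow_mul, ← pow_succ']
      congr 1
      omega
    rw [h4, mul_assoc, ← hm]
    push_cast
    ring
end

section
/- Let A(x) be a formal power series over ℚ with zero constant term and A^Δ(n,k) = [x^n]A(x)^k its composita, and suppose A(A(x)) = F(x) where F has linear coefficient 1 and integer coefficients, with A having linear coefficient 1. Define the recurrence B(n,n) = 1 and B(n,k) = (1/2)·(F^Δ(n,k) − Σ_{m=k+1}^{n−1} B(n,m)·B(m,k)) for n > k. Then A^Δ(n,k) = B(n,k) for all 1 ≤ k ≤ n. -/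
open PowerSeries Finset

lemma coeff_pow_zero' {A : PowerSeries ℚ} (hA0 : constantCoeff A = 0) {m n : ℕ}
    (h : n < m) : coeff n (A ^ m) = 0 := by
  have hX : (X : PowerSeries ℚ) ∣ A := X_dvd_iff.mpr hA0
  have : (X : PowerSeries ℚ) ^ m ∣ A ^ m := pow_dvd_pow_of_dvd hX m
  exact (X_pow_dvd_iff.mp this) n h

lemma coeff_pow_diag' {A : PowerSeries ℚ} (hA0 : constantCoeff A = 0)
    (hA1 : coeff 1 A = 1) (m : ℕ) : coeff m (A ^ m) = 1 := by
  induction m with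
  | zero => simp
  | succ m ih =>
    rw [pow_succ, coeff_mul]
    rw [Finset.sum_eq_single (m, 1)]
    · simp [ih, hA1]
    · rintro ⟨i, j⟩ hij hne
      rw [Finset.HasAntidiagonal.mem_antidiagonal] at hij
      simp only at hij
      rcases lt_trichotomy i m with h | h | h
      · rw [coeff_pow_zero' hA0 h, zero_mul]
      · exact absurd (by simp [h]; omega) hne
      · have hj : j = 0 := by omega
        subst hj
        simp [coeff_zero_eq_constantCoeff, hA0]
    · intro h; exact absurd (Finset.HasAntidiagonal.mem_antidiagonal.mpr (by omega)) h

lemma tri' (n : ℕ) (f : ℕ → ℕ → ℚ) (hf : ∀ p q, n < p + q → f p q = 0) :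
    ∑ p ∈ range (n+1), ∑ q ∈ range (n+1), f p q
      = ∑ m ∈ range (n+1), ∑ pq ∈ antidiagonal m, f pq.1 pq.2 := by
  rw [← Finset.sum_product']
  rw [← Finset.sum_biUnion (by
    intro a _ b _ hab
    simp only [Finset.disjoint_left]
    rintro ⟨p, q⟩ hp hq
    rw [Finset.HasAntidiagonal.mem_antidiagonal] at hp hq
    omega )]
  symm
  apply Finset.sum_subset
  · rintro ⟨p, q⟩ h
    rw [Finset.mem_biUnion] at h
    obtain ⟨m, hm, hpq⟩ := h
    rw [Finset.HasAntidiagonal.mem_antidiagonal] at hpq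
    rw [Finset.mem_range] at hm
    simp only [Finset.mem_product, Finset.mem_range]
    omega
  · rintro ⟨p, q⟩ h1 h2
    apply hf
    rw [Finset.mem_biUnion] at h2
    push_neg at h2
    by_contra hle
    push_neg at hle
    exact h2 (p + q) (Finset.mem_range.mpr (by omega)) (Finset.HasAntidiagonal.mem_antidiagonal.mpr rfl)

lemma comp_pow' {A : PowerSeries ℚ} (hA0 : constantCoeff A = 0) (k : ℕ) : ∀ n : ℕ,
    coeff n ((PSComp A A) ^ k)
      = ∑ m ∈ range (n + 1), coeff m (A ^ k) * coeff n (A ^ m) := by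
  induction k with
  | zero =>
    intro n
    simp only [pow_zero, coeff_one]
    rw [Finset.sum_eq_single 0]
    · simp [coeff_one]
    · intro m _ hm; simp [coeff_one, hm]
    · simp
  | succ k ih =>
    intro n
    rw [pow_succ, coeff_mul]
    have step1 : ∀ ij ∈ antidiagonal n,
        coeff ij.1 ((PSComp A A) ^ k) * coeff ij.2 (PSComp A A)
        = (∑ p ∈ range (n+1), coeff p (A ^ k) * coeff ij.1 (A ^ p)) *
          (∑ q ∈ range (n+1), coeff q A * coeff ij.2 (A ^ q)) := by
      rintro ⟨i, j⟩ hij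
      rw [Finset.HasAntidiagonal.mem_antidiagonal] at hij
      have hij' : i + j = n := hij
      simp only
      rw [ih i, PSComp, coeff_mk]
      congr 1
      · apply Finset.sum_subset
        · apply Finset.range_subset_range.mpr; omega
        · intro p _ hp
          rw [Finset.mem_range, not_lt] at hp
          rw [coeff_pow_zero' hA0 (show i < p by omega), mul_zero]
      · apply Finset.sum_subset
        · apply Finset.range_subset_range.mpr; omega
        · intro q _ hq
          rw [Finset.mem_range, not_lt] at hq
          rw [coeff_pow_zero' hA0 (show j < q by omega), mul_zero]
    rw [Finset.sum_congr rfl step1]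
    have step2 : ∑ ij ∈ antidiagonal n,
        (∑ p ∈ range (n+1), coeff p (A ^ k) * coeff ij.1 (A ^ p)) *
          (∑ q ∈ range (n+1), coeff q A * coeff ij.2 (A ^ q))
        = ∑ p ∈ range (n+1), ∑ q ∈ range (n+1),
            coeff p (A ^ k) * coeff q A * coeff n (A ^ (p + q)) := by
      simp_rw [Finset.sum_mul_sum]
      rw [Finset.sum_comm]
      apply Finset.sum_congr rfl
      intro p _
      rw [Finset.sum_comm]
      apply Finset.sum_congr rfl
      intro q _
      rw [pow_add, coeff_mul, Finset.mul_sum]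
      apply Finset.sum_congr rfl
      rintro ⟨i, j⟩ _
      ring
    rw [step2, tri' n _ (by
      intro p q hpq
      rw [coeff_pow_zero' hA0 hpq, mul_zero])]
    apply Finset.sum_congr rfl
    intro m _
    rw [pow_succ, coeff_mul, Finset.sum_mul]
    apply Finset.sum_congr rfl
    rintro ⟨p, q⟩ hpq
    rw [Finset.HasAntidiagonal.mem_antidiagonal] at hpq
    simp only
    rw [hpq]

theorem stmt_13 (F A : PowerSeries ℚ)
    (hA0 : constantCoeff A = 0) (hA1 : coeff 1 A = 1)
    (hF1 : coeff 1 F = 1) (hFint : ∀ n, ∃ m : ℤ, coeff n F = m)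
    (hAF : PSComp A A = F)
    (B : ℕ → ℕ → ℚ) (hBdiag : ∀ n, B n n = 1)
    (hBrec : ∀ n k, k < n →
      B n k = (1 / 2) * (coeff n (F ^ k) - ∑ m ∈ Ioo k n, B n m * B m k)) :
    ∀ n k, 1 ≤ k → k ≤ n → coeff n (A ^ k) = B n k := by
  subst hAF
  suffices h : ∀ d n k, n - k = d → 1 ≤ k → k ≤ n → coeff n (A ^ k) = B n k by
    intro n k hk1 hkn; exact h (n - k) n k rfl hk1 hkn
  intro d
  induction d using Nat.strong_induction_on with
  | _ d ih =>
    intro n k hd hk1 hkn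
    rcases eq_or_lt_of_le hkn with heq | hlt
    · subst heq; rw [coeff_pow_diag' hA0 hA1, hBdiag]
    · rw [hBrec n k hlt]
      have hF : coeff n ((PSComp A A) ^ k)
          = 2 * coeff n (A ^ k)
            + ∑ m ∈ Ioo k n, coeff m (A ^ k) * coeff n (A ^ m) := by
        rw [comp_pow' hA0 k n]
        have hIcc : ∑ m ∈ range (n + 1), coeff m (A ^ k) * coeff n (A ^ m)
            = ∑ m ∈ Icc k n, coeff m (A ^ k) * coeff n (A ^ m) := by
          symm
          apply Finset.sum_subset
          · intro m hm; rw [Finset.mem_Icc] at hm; rw [Finset.mem_range]; omega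
          · intro m hmr hm
            rw [Finset.mem_range] at hmr
            rw [Finset.mem_Icc, not_and_or, not_le, not_le] at hm
            rcases hm with h | h
            · rw [coeff_pow_zero' hA0 h, zero_mul]
            · omega
        rw [hIcc]
        have h1 : Icc k n = insert k (Ioc k n) := by ext m; simp; omega
        have h2 : Ioc k n = insert n (Ioo k n) := by ext m; simp; omega
        rw [h1, Finset.sum_insert (by simp), h2,
          Finset.sum_insert (by simp), coeff_pow_diag' hA0 hA1,
          coeff_pow_diag' hA0 hA1]
        ring
      have hsum : ∑ m ∈ Ioo k n, B n m * B m k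
          = ∑ m ∈ Ioo k n, coeff m (A ^ k) * coeff n (A ^ m) := by
        apply Finset.sum_congr rfl
        intro m hm
        rw [Finset.mem_Ioo] at hm
        rw [← ih (n - m) (by omega) n m rfl (by omega) (by omega),
          ← ih (m - k) (by omega) m k rfl (by omega) (by omega)]
        ring
      rw [hF, hsum]
      ring
end

section
/- Let A(x) be the unique formal power series over ℚ with zero constant term and linear coefficient 1 satisfying A(A(x)) = x + 16x^2. Then 4^{n−1}·[x^n]A(x) ∈ ℤ for all n ≥ 1; moreover the first coefficients of the compositional fourth root, i.e., the series B with B(B(B(B(x)))) = x + 16x^2, B(0)=0 and [x^1]B = 1, are [x^2]B = 4 and [x^3]B = −48. -/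
open PowerSeries Finset

lemma cpz (φ : PowerSeries ℚ) (h0 : constantCoeff φ = 0) (m n : ℕ) (h : n < m) :
    coeff n (φ^m) = 0 :=
  (X_pow_dvd_iff.1 (pow_dvd_pow_of_dvd (X_dvd_iff.2 h0) m)) n h

lemma cps (φ : PowerSeries ℚ) (h0 : constantCoeff φ = 0) (h1 : coeff 1 φ = 1) :
    ∀ n, coeff n (φ^n) = 1 := by
  intro n
  induction n with
  | zero => simp
  | succ n ih =>
    rw [pow_succ, coeff_mul]
    rw [Finset.sum_eq_single (n, 1)]
    · simp [ih, h1]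
    · rintro ⟨i, j⟩ hp hne
      simp only [HasAntidiagonal.mem_antidiagonal] at hp
      rcases Nat.lt_or_ge i n with h | h
      · rw [cpz φ h0 n i h, zero_mul]
      · have hij : i = n ∨ i = n + 1 := by omega
        rcases hij with rfl | rfl
        · exact absurd (by simp [show j = 1 by omega]) hne
        · have : j = 0 := by omega
          subst this
          rw [coeff_zero_eq_constantCoeff, h0, mul_zero]
    · intro h
      exact absurd (by simp) h

lemma sum_ex {α : Type*} (s : Finset α) (f : α → ℚ) (c : ℚ) (Q : Prop)
    (h : ∀ i ∈ s, ∃ k : ℤ, f i = c * k ∧ (Q → (4:ℤ) ∣ k)) :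
    ∃ U : ℤ, ∑ i ∈ s, f i = c * U ∧ (Q → (4:ℤ) ∣ U) := by
  classical
  induction s using Finset.induction with
  | empty => exact ⟨0, by simp⟩
  | @insert a s hx ih =>
    obtain ⟨k, hk, hk4⟩ := h a (Finset.mem_insert_self a s)
    obtain ⟨U, hU, hU4⟩ := ih fun i hi => h i (Finset.mem_insert_of_mem hi)
    refine ⟨k + U, ?_, fun hq => dvd_add (hk4 hq) (hU4 hq)⟩
    rw [Finset.sum_insert hx, hk, hU]
    push_cast
    ring

lemma key (A : PowerSeries ℚ) (hA0 : constantCoeff A = 0)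
    (hA1 : coeff 1 A = 1) (hA : PSComp A A = X + C 16 * X ^ 2) :
    ∀ n m : ℕ, 1 ≤ m → m ≤ n →
      ∃ k : ℤ, (4:ℚ)^n * coeff n (A^m) = 4^m * k ∧ (m < n → (4:ℤ) ∣ k) := by
  intro n
  induction n using Nat.strong_induction_on with
  | _ n ih =>
  -- powers case, m ≥ 2
  have hpow : ∀ m : ℕ, 2 ≤ m → m ≤ n →
      ∃ k : ℤ, (4:ℚ)^n * coeff n (A^m) = 4^m * k ∧ (m < n → (4:ℤ) ∣ k) := by
    intro m hm2 hmn
    obtain ⟨m', rfl⟩ : ∃ m', m = m' + 1 := ⟨m - 1, by omega⟩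
    have hm'1 : 1 ≤ m' := by omega
    rw [pow_succ', coeff_mul, Finset.mul_sum]
    apply sum_ex
    rintro ⟨i, j⟩ hp
    simp only [HasAntidiagonal.mem_antidiagonal] at hp
    by_cases hi0 : i = 0
    · refine ⟨0, ?_, by simp⟩
      subst hi0
      simp [coeff_zero_eq_constantCoeff, hA0]
    by_cases hj : j < m'
    · refine ⟨0, ?_, by simp⟩
      rw [cpz A hA0 m' j hj]
      simp
    push_neg at hj
    have hin : i < n := by omega
    have hjn : j < n := by omega
    obtain ⟨u, hu, hu4⟩ := ih i hin 1 le_rfl (by omega)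
    obtain ⟨v, hv, hv4⟩ := ih j hjn m' hm'1 hj
    refine ⟨u * v, ?_, ?_⟩
    · have : (4:ℚ)^n = 4^i * 4^j := by rw [← pow_add, hp]
      rw [this]
      have e : (4^i * 4^j) * ((coeff (i,j).1) A * (coeff (i,j).2) (A^m')) =
          (4^i * coeff i A) * (4^j * coeff j (A^m')) := by ring
      rw [e]
      simp only [pow_one] at hu
      rw [hu, hv]
      push_cast
      ring
    · intro hmn'
      rcases Nat.lt_or_ge 1 i with h1 | h1
      · exact Dvd.dvd.mul_right (hu4 h1) v
      · have hi1 : i = 1 := by omega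
        have : m' < j := by omega
        exact Dvd.dvd.mul_left (hv4 this) u
  -- m = 1 case
  have hone : 1 ≤ n →
      ∃ k : ℤ, (4:ℚ)^n * coeff n (A^1) = 4^1 * k ∧ (1 < n → (4:ℤ) ∣ k) := by
    intro hn1
    rcases Nat.lt_or_ge n 2 with hn2 | hn2
    · have : n = 1 := by omega
      subst this
      exact ⟨1, by simp [hA1], by omega⟩
    -- n ≥ 2
    have heq := congrArg (coeff n) hA
    have hL : coeff n (PSComp A A) =
        ∑ m' ∈ range (n + 1), coeff m' A * coeff n (A ^ m') := by
      simp [PSComp, coeff_mk]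
    have hR : coeff n (X + C 16 * X ^ 2 : PowerSeries ℚ) =
        if n = 2 then 16 else 0 := by
      rw [map_add, coeff_X, coeff_C_mul, coeff_X_pow]
      rcases eq_or_ne n 2 with rfl | h
      · norm_num
      · simp [h, show n ≠ 1 by omega]
    rw [hL, hR] at heq
    have hsplit : range (n + 1) = insert 0 (insert 1 (insert n (Finset.Ico 2 n))) := by
      ext x
      simp only [Finset.mem_range, Finset.mem_insert, Finset.mem_Ico]
      omega
    have hAn1 : coeff n (A^n) = 1 := cps A hA0 hA1 n
    rw [hsplit, Finset.sum_insert (by simp; omega), Finset.sum_insert (by simp; omega),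
      Finset.sum_insert (by simp)] at heq
    simp only [pow_zero, coeff_zero_eq_constantCoeff, hA0, pow_one, hA1, hAn1,
      mul_one, zero_mul, one_mul, zero_add] at heq
    -- heq : coeff n A + (coeff n A + S) = r
    have hterm : ∀ m' ∈ Finset.Ico 2 n, ∃ k : ℤ,
        (4:ℚ)^n * (coeff m' A * coeff n (A ^ m')) = 64 * k ∧ (False → (4:ℤ) ∣ k) := by
      intro m' hm'
      simp only [Finset.mem_Ico] at hm'
      obtain ⟨u, hu, hu4⟩ := ih m' hm'.2 1 le_rfl (by omega)
      obtain ⟨v, hv, hv4⟩ := hpow m' hm'.1 hm'.2.le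
      have hu4' := hu4 (by omega)
      have hv4' := hv4 hm'.2
      obtain ⟨u', rfl⟩ := hu4'
      obtain ⟨v', rfl⟩ := hv4'
      refine ⟨u' * v', ?_, fun h => h.elim⟩
      have hpm : (0:ℚ) < 4 ^ m' := by positivity
      have e : (4:ℚ)^m' * ((4:ℚ)^n * (coeff m' A * coeff n (A ^ m'))) =
          (4^m' * coeff m' A) * (4^n * coeff n (A^m')) := by ring
      have e2 : (4:ℚ)^m' * (64 * ((u' * v' : ℤ) : ℚ)) =
          (4 * ((4 * u' : ℤ):ℚ)) * (4^m' * ((4*v' : ℤ):ℚ)) := by push_cast; ring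
      apply mul_left_cancel₀ (ne_of_gt hpm)
      simp only [pow_one] at hu
      rw [e, e2, hu, hv]
    have hSex := sum_ex (Finset.Ico 2 n)
      (fun m' => (4:ℚ)^n * (coeff m' A * coeff n (A ^ m'))) 64 False hterm
    obtain ⟨U, hU, _⟩ := hSex
    rw [← Finset.mul_sum] at hU
    -- heq gives: coeff n A + (coeff n A + S) = r
    rcases eq_or_ne n 2 with rfl | hne2
    · simp only [if_pos rfl] at heq
      refine ⟨32 - 8 * U, ?_, fun _ => ⟨8 - 2*U, by ring⟩⟩
      have : (4:ℚ)^2 * (coeff 2 A + (coeff 2 A +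
          ∑ m' ∈ Finset.Ico 2 2, coeff m' A * coeff 2 (A ^ m'))) = 16 * 16 := by
        rw [heq]; norm_num
      rw [mul_add, mul_add, hU] at this
      push_cast
      rw [pow_one]
      nlinarith [this]
    · simp only [if_neg hne2] at heq
      refine ⟨-8 * U, ?_, fun _ => ⟨-2*U, by ring⟩⟩
      have : (4:ℚ)^n * (coeff n A + (coeff n A +
          ∑ m' ∈ Finset.Ico 2 n, coeff m' A * coeff n (A ^ m'))) = 0 := by
        rw [heq]; ring
      rw [mul_add, mul_add, hU] at this
      push_cast
      rw [pow_one]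
      nlinarith [this]
  intro m hm1 hmn
  rcases Nat.lt_or_ge m 2 with h | h
  · have : m = 1 := by omega
    subst this
    exact hone (by omega)
  · exact hpow m h hmn

lemma comp_c0 (G φ : PowerSeries ℚ) :
    constantCoeff (PSComp G φ) = constantCoeff G := by
  rw [← coeff_zero_eq_constantCoeff]
  simp [PSComp, coeff_mk]

lemma comp_c1 (G φ : PowerSeries ℚ) :
    coeff 1 (PSComp G φ) = coeff 1 G * coeff 1 φ := by
  simp [PSComp, coeff_mk, Finset.sum_range_succ]

lemma coeff2_sq (φ : PowerSeries ℚ) (h0 : constantCoeff φ = 0) :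
    coeff 2 (φ^2) = (coeff 1 φ)^2 := by
  rw [sq, coeff_mul, Finset.Nat.sum_antidiagonal_eq_sum_range_succ_mk]
  simp [Finset.sum_range_succ, h0]
  ring

lemma coeff3_sq (φ : PowerSeries ℚ) (h0 : constantCoeff φ = 0) :
    coeff 3 (φ^2) = 2 * coeff 1 φ * coeff 2 φ := by
  rw [sq, coeff_mul, Finset.Nat.sum_antidiagonal_eq_sum_range_succ_mk]
  simp [Finset.sum_range_succ, h0]
  ring

lemma coeff3_cube (φ : PowerSeries ℚ) (h0 : constantCoeff φ = 0) :
    coeff 3 (φ^3) = (coeff 1 φ)^3 := by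
  rw [pow_succ, coeff_mul, Finset.Nat.sum_antidiagonal_eq_sum_range_succ_mk]
  have h1 : coeff 1 (φ^2) = 0 := by
    rw [sq, coeff_mul, Finset.Nat.sum_antidiagonal_eq_sum_range_succ_mk]
    simp [Finset.sum_range_succ, h0]
  have h00 : coeff 0 (φ^2) = 0 := by
    simp [sq, coeff_mul, h0]
  simp [Finset.sum_range_succ, h0, coeff2_sq φ h0, h1, h00]
  ring

lemma comp_c2 (G φ : PowerSeries ℚ) (h0 : constantCoeff φ = 0) :
    coeff 2 (PSComp G φ) =
      coeff 1 G * coeff 2 φ + coeff 2 G * (coeff 1 φ)^2 := by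
  simp [PSComp, coeff_mk, Finset.sum_range_succ, coeff2_sq φ h0]

lemma comp_c3 (G φ : PowerSeries ℚ) (h0 : constantCoeff φ = 0) :
    coeff 3 (PSComp G φ) =
      coeff 1 G * coeff 3 φ + coeff 2 G * (2 * coeff 1 φ * coeff 2 φ)
        + coeff 3 G * (coeff 1 φ)^3 := by
  simp [PSComp, coeff_mk, Finset.sum_range_succ, coeff3_sq φ h0, coeff3_cube φ h0]

theorem stmt_14 (A : PowerSeries ℚ) (hA0 : constantCoeff A = 0)
    (hA1 : coeff 1 A = 1) (hA : PSComp A A = X + C 16 * X ^ 2)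
    (B : PowerSeries ℚ) (hB0 : constantCoeff B = 0) (hB1 : coeff 1 B = 1)
    (hB : PSComp B (PSComp B (PSComp B B)) = X + C 16 * X ^ 2) :
    (∀ n, 1 ≤ n → ∃ m : ℤ, (4 : ℚ) ^ (n - 1) * coeff n A = m) ∧
      coeff 2 B = 4 ∧ coeff 3 B = -48 := by
  constructor
  · intro n hn
    obtain ⟨n', rfl⟩ : ∃ n', n = n' + 1 := ⟨n - 1, by omega⟩
    obtain ⟨k, hk, -⟩ := key A hA0 hA1 hA (n' + 1) 1 le_rfl (by omega)
    refine ⟨k, ?_⟩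
    simp only [pow_one] at hk
    have h4 : (4:ℚ) ≠ 0 := by norm_num
    apply mul_left_cancel₀ h4
    rw [show n' + 1 - 1 = n' from rfl]
    calc (4:ℚ) * (4 ^ n' * coeff (n' + 1) A)
        = 4 ^ (n' + 1) * coeff (n' + 1) A := by ring
      _ = 4 * k := hk
  · -- B part
    set D := PSComp B B with hD
    set E := PSComp B D with hE
    have hd0 : constantCoeff D = 0 := by rw [hD, comp_c0, hB0]
    have hd1 : coeff 1 D = 1 := by rw [hD, comp_c1, hB1]; ring
    have he0 : constantCoeff E = 0 := by rw [hE, comp_c0, hB0]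
    have he1 : coeff 1 E = 1 := by rw [hE, comp_c1, hB1, hd1]; ring
    have hd2 : coeff 2 D = 2 * coeff 2 B := by
      rw [hD, comp_c2 B B hB0, hB1]; ring
    have he2 : coeff 2 E = 3 * coeff 2 B := by
      rw [hE, comp_c2 B D hd0, hB1, hd1, hd2]; ring
    have hd3 : coeff 3 D = 2 * coeff 3 B + 2 * (coeff 2 B)^2 := by
      rw [hD, comp_c3 B B hB0, hB1]; ring
    have he3 : coeff 3 E = 3 * coeff 3 B + 6 * (coeff 2 B)^2 := by
      rw [hE, comp_c3 B D hd0, hB1, hd1, hd2, hd3]; ring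
    have hRHS2 : coeff 2 (X + C 16 * X ^ 2 : PowerSeries ℚ) = 16 := by
      rw [map_add, coeff_X, coeff_C_mul, coeff_X_pow]; norm_num
    have hRHS3 : coeff 3 (X + C 16 * X ^ 2 : PowerSeries ℚ) = 0 := by
      rw [map_add, coeff_X, coeff_C_mul, coeff_X_pow]; norm_num
    have h2 := congrArg (coeff 2) hB
    have h3 := congrArg (coeff 3) hB
    rw [comp_c2 B E he0, hB1, he1, he2, hRHS2] at h2
    rw [comp_c3 B E he0, hB1, he1, he2, he3, hRHS3] at h3
    have hb2 : coeff 2 B = 4 := by linarith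
    refine ⟨hb2, ?_⟩
    rw [hb2] at h3
    nlinarith [h3]
end

section
/- Let F be a formal power series over ℚ with zero constant term and linear coefficient 1. Then for every n ≥ 0, there exists a unique formal power series A over ℚ with zero constant term and linear coefficient 1 such that the 2^n-fold compositional iterate A^{(2^n)}(x) equals F(x). -/
open PowerSeries Finset

/-- The `m`-fold compositional iterate of `A`: `A^{(0)} = x`,
`A^{(m+1)} = A(A^{(m)}(x))`. -/
noncomputable def PSIter (A : PowerSeries ℚ) (m : ℕ) : PowerSeries ℚ :=
  (fun G => PSComp A G)^[m] X

lemma coeff_PSComp (G A : PowerSeries ℚ) (n : ℕ) :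
    coeff n (PSComp G A) = ∑ m ∈ range (n + 1), coeff m G * coeff n (A ^ m) :=
  coeff_mk _ _

lemma PSIter_succ (A : PowerSeries ℚ) (k : ℕ) :
    PSIter A (k + 1) = PSComp A (PSIter A k) :=
  Function.iterate_succ_apply' _ _ _

lemma agree_iff (A A' : PowerSeries ℚ) (j : ℕ) :
    (X : PowerSeries ℚ) ^ j ∣ A - A' ↔ ∀ i < j, coeff i A = coeff i A' := by
  rw [X_pow_dvd_iff]
  simp [sub_eq_zero]

lemma pow_agree {B B' : PowerSeries ℚ} {j : ℕ} (h : (X : PowerSeries ℚ) ^ j ∣ B - B') (m : ℕ) :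
    (X : PowerSeries ℚ) ^ j ∣ B ^ m - B' ^ m :=
  h.trans (sub_dvd_pow_sub_pow B B' m)

lemma comp_agree {A A' B B' : PowerSeries ℚ} {j : ℕ}
    (hA : (X : PowerSeries ℚ) ^ j ∣ A - A') (hB : (X : PowerSeries ℚ) ^ j ∣ B - B') :
    (X : PowerSeries ℚ) ^ j ∣ PSComp A B - PSComp A' B' := by
  rw [agree_iff] at hA hB ⊢
  intro i hi
  rw [coeff_PSComp, coeff_PSComp]
  refine Finset.sum_congr rfl fun m hm => ?_
  rw [mem_range] at hm
  have h1 : coeff m A = coeff m A' := hA m (lt_of_le_of_lt (Nat.lt_succ_iff.mp hm) hi)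
  have h2 : coeff i (B ^ m) = coeff i (B' ^ m) := by
    have := (agree_iff _ _ j).mpr hB
    have := (agree_iff _ _ j).mp (pow_agree this m)
    exact this i hi
  rw [h1, h2]

lemma iter_agree {A A' : PowerSeries ℚ} {j : ℕ}
    (hA : (X : PowerSeries ℚ) ^ j ∣ A - A') (k : ℕ) :
    (X : PowerSeries ℚ) ^ j ∣ PSIter A k - PSIter A' k := by
  induction k with
  | zero => simp [PSIter]
  | succ k ih => rw [PSIter_succ, PSIter_succ]; exact comp_agree hA ih

lemma iter_const0 {A : PowerSeries ℚ} (h0 : constantCoeff A = 0) (k : ℕ) :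
    constantCoeff (PSIter A k) = 0 := by
  induction k with
  | zero => simp [PSIter]
  | succ k ih =>
      rw [← coeff_zero_eq_constantCoeff] at *
      rw [PSIter_succ, coeff_PSComp]
      simp [h0]
  -- range 1 sum: m = 0 term is coeff 0 A * coeff 0 1 = coeff 0 A

lemma iter_coeff1 {A : PowerSeries ℚ} (h0 : constantCoeff A = 0)
    (h1 : coeff 1 A = 1) (k : ℕ) :
    coeff 1 (PSIter A k) = 1 := by
  induction k with
  | zero => simp [PSIter]
  | succ k ih =>
      rw [PSIter_succ, coeff_PSComp]
      rw [show (1:ℕ) + 1 = 2 from rfl, Finset.sum_range_succ, Finset.sum_range_one]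
      simp [h1, ih, coeff_zero_eq_constantCoeff, h0]

lemma X_dvd_iter {A : PowerSeries ℚ} (h0 : constantCoeff A = 0) (k : ℕ) :
    (X : PowerSeries ℚ) ∣ PSIter A k := by
  rw [X_dvd_iff]; exact iter_const0 h0 k

lemma coeff_pow_self_s15 {B : PowerSeries ℚ} (h0 : constantCoeff B = 0)
    (h1 : coeff 1 B = 1) (j : ℕ) :
    coeff j (B ^ j) = 1 := by
  rcases Nat.eq_zero_or_pos j with rfl | hj
  · simp
  have hdvd : (X : PowerSeries ℚ) ^ (j + 1) ∣ B ^ j - X ^ j := by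
    rw [← geom_sum₂_mul B X j]
    have h2 : (X : PowerSeries ℚ) ^ 2 ∣ B - X := by
      rw [X_pow_dvd_iff]
      intro m hm
      interval_cases m <;> simp [h0, h1, coeff_zero_eq_constantCoeff]
    have hg : (X : PowerSeries ℚ) ^ (j - 1) ∣ ∑ i ∈ range j, B ^ i * X ^ (j - 1 - i) := by
      refine Finset.dvd_sum fun i hi => ?_
      rw [mem_range] at hi
      have hXB : (X : PowerSeries ℚ) ^ i ∣ B ^ i := pow_dvd_pow_of_dvd (X_dvd_iff.mpr h0) i
      have : (X : PowerSeries ℚ) ^ (j - 1) = X ^ i * X ^ (j - 1 - i) := by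
        rw [← pow_add]
        congr 1
        omega
      rw [this]
      exact mul_dvd_mul hXB dvd_rfl
    have := mul_dvd_mul hg h2
    rwa [← pow_add, show j - 1 + 2 = j + 1 by omega] at this
  have hc : coeff j (B ^ j - X ^ j) = 0 := by
    rw [X_pow_dvd_iff] at hdvd
    exact hdvd j (Nat.lt_succ_self j)
  rw [map_sub, sub_eq_zero] at hc
  rw [hc]
  simp [X_pow_eq, coeff_monomial]

lemma coeff_pow_mid {B B' : PowerSeries ℚ} {j m : ℕ} (hm : 2 ≤ m)
    (h0 : constantCoeff B = 0) (h0' : constantCoeff B' = 0)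
    (h : (X : PowerSeries ℚ) ^ j ∣ B - B') :
    coeff j (B ^ m) = coeff j (B' ^ m) := by
  have hdvd : (X : PowerSeries ℚ) ^ (j + 1) ∣ B ^ m - B' ^ m := by
    rw [← geom_sum₂_mul B B' m]
    have hg : (X : PowerSeries ℚ) ∣ ∑ i ∈ range m, B ^ i * B' ^ (m - 1 - i) := by
      refine Finset.dvd_sum fun i _ => ?_
      rcases Nat.eq_zero_or_pos i with rfl | hip
      · refine dvd_mul_of_dvd_right ?_ _
        exact dvd_pow (X_dvd_iff.mpr h0') (by omega)
      · exact dvd_mul_of_dvd_left (dvd_pow (X_dvd_iff.mpr h0) (by omega)) _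
    have := mul_dvd_mul hg h
    rwa [← pow_succ'] at this
  rw [X_pow_dvd_iff] at hdvd
  have := hdvd j (Nat.lt_succ_self j)
  rw [map_sub, sub_eq_zero] at this
  exact this

lemma comp_key {A A' B B' : PowerSeries ℚ} {j : ℕ} (hj : 2 ≤ j)
    (hA1 : coeff 1 A = 1) (hA1' : coeff 1 A' = 1)
    (hB0 : constantCoeff B = 0) (hB1 : coeff 1 B = 1)
    (hB0' : constantCoeff B' = 0) (hB1' : coeff 1 B' = 1)
    (hA : (X : PowerSeries ℚ) ^ j ∣ A - A') (hB : (X : PowerSeries ℚ) ^ j ∣ B - B') :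
    coeff j (PSComp A B) - coeff j A - coeff j B
      = coeff j (PSComp A' B') - coeff j A' - coeff j B' := by
  have key : coeff j (PSComp A B) - coeff j (PSComp A' B')
      = (coeff j B - coeff j B') + (coeff j A - coeff j A') := by
    rw [coeff_PSComp, coeff_PSComp, ← Finset.sum_sub_distrib]
    have step : ∀ m ∈ range (j + 1),
        coeff m A * coeff j (B ^ m) - coeff m A' * coeff j (B' ^ m)
        = (if m = 1 then coeff j B - coeff j B' else 0)
          + (if m = j then coeff j A - coeff j A' else 0) := by
      intro m hm
      rw [mem_range, Nat.lt_succ_iff] at hm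
      rcases eq_or_ne m 1 with rfl | hm1
      · rw [if_pos rfl, if_neg (by omega), pow_one, pow_one, hA1, hA1']
        ring
      rcases eq_or_ne m j with rfl | hmj
      · rw [if_neg hm1, if_pos rfl,
          coeff_pow_self_s15 hB0 hB1, coeff_pow_self_s15 hB0' hB1']
        ring
      rw [if_neg hm1, if_neg hmj, add_zero, sub_eq_zero]
      rcases Nat.eq_zero_or_pos m with rfl | hmp
      · simp [show j ≠ 0 by omega]
      have hm2 : 2 ≤ m := by omega
      have hmlt : m < j := by omega
      rw [(agree_iff A A' j).mp hA m hmlt, coeff_pow_mid hm2 hB0 hB0' hB]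
    rw [Finset.sum_congr rfl step, Finset.sum_add_distrib,
      Finset.sum_ite_eq' (range (j+1)) 1, Finset.sum_ite_eq' (range (j+1)) j]
    rw [if_pos (mem_range.mpr (by omega)), if_pos (mem_range.mpr (by omega))]
  linarith [key]

lemma iter_key {A A' : PowerSeries ℚ} {j : ℕ} (hj : 2 ≤ j)
    (hA0 : constantCoeff A = 0) (hA1 : coeff 1 A = 1)
    (hA0' : constantCoeff A' = 0) (hA1' : coeff 1 A' = 1)
    (hA : (X : PowerSeries ℚ) ^ j ∣ A - A') (k : ℕ) :
    coeff j (PSIter A k) - k * coeff j A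
      = coeff j (PSIter A' k) - k * coeff j A' := by
  induction k with
  | zero => simp [PSIter]
  | succ k ih =>
      rw [PSIter_succ, PSIter_succ]
      have hc := comp_key hj hA1 hA1' (iter_const0 hA0 k) (iter_coeff1 hA0 hA1 k)
        (iter_const0 hA0' k) (iter_coeff1 hA0' hA1' k) hA (iter_agree hA k)
      push_cast
      linarith [hc, ih]

noncomputable def rc (F : PowerSeries ℚ) (k : ℕ) : ℕ → ℚ
  | 0 => 0
  | 1 => 1
  | (j+2) => (coeff (j+2) F - coeff (j+2)
      (PSIter (PowerSeries.mk fun i => if h : i < j + 2 then rc F k i else 0) k)) / k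
  termination_by j => j

noncomputable def PSAux (F : PowerSeries ℚ) (k j : ℕ) : PowerSeries ℚ :=
  PowerSeries.mk fun i => if i < j then rc F k i else 0

lemma rc_zero (F : PowerSeries ℚ) (k : ℕ) : rc F k 0 = 0 := by rw [rc]
lemma rc_one (F : PowerSeries ℚ) (k : ℕ) : rc F k 1 = 1 := by rw [rc]

lemma rc_eq (F : PowerSeries ℚ) (k j : ℕ) (hj : 2 ≤ j) :
    rc F k j = (coeff j F - coeff j (PSIter (PSAux F k j) k)) / k := by
  obtain ⟨j', rfl⟩ : ∃ j', j = j' + 2 := ⟨j - 2, by omega⟩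
  rw [rc, PSAux]
  congr 2

theorem psroot (F : PowerSeries ℚ) (hF0 : constantCoeff F = 0)
    (hF1 : coeff 1 F = 1) (k : ℕ) (hk : 1 ≤ k) :
    ∃! A : PowerSeries ℚ,
      constantCoeff A = 0 ∧ coeff 1 A = 1 ∧ PSIter A k = F := by
  have hkQ : (k : ℚ) ≠ 0 := Nat.cast_ne_zero.mpr (by omega)
  set A : PowerSeries ℚ := PowerSeries.mk (rc F k) with hAdef
  have hA0 : constantCoeff A = 0 := by
    rw [← coeff_zero_eq_constantCoeff, hAdef, coeff_mk, rc_zero]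
  have hA1 : coeff 1 A = 1 := by rw [hAdef, coeff_mk, rc_one]
  have hAit : PSIter A k = F := by
    ext j
    rcases Nat.lt_or_ge j 2 with hj | hj
    · interval_cases j
      · rw [coeff_zero_eq_constantCoeff, iter_const0 hA0, hF0]
      · rw [iter_coeff1 hA0 hA1, hF1]
    · set Aj := PSAux F k j with hAjdef
      have hAj0 : constantCoeff Aj = 0 := by
        rw [← coeff_zero_eq_constantCoeff, hAjdef, PSAux, coeff_mk,
          if_pos (by omega), rc_zero]
      have hAj1 : coeff 1 Aj = 1 := by
        rw [hAjdef, PSAux, coeff_mk, if_pos (by omega), rc_one]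
      have hAjj : coeff j Aj = 0 := by
        rw [hAjdef, PSAux, coeff_mk, if_neg (by omega)]
      have hdvd : (X : PowerSeries ℚ) ^ j ∣ A - Aj := by
        rw [agree_iff]
        intro i hi
        rw [hAdef, hAjdef, PSAux, coeff_mk, coeff_mk, if_pos hi]
      have hkey := iter_key hj hA0 hA1 hAj0 hAj1 hdvd k
      have hrc : coeff j A = (coeff j F - coeff j (PSIter Aj k)) / k := by
        rw [hAdef, coeff_mk, rc_eq F k j hj, hAjdef]
      rw [hrc, hAjj] at hkey
      field_simp at hkey
      linarith [hkey]
  refine ⟨A, ⟨hA0, hA1, hAit⟩, ?_⟩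
  rintro B ⟨hB0, hB1, hBit⟩
  have key : ∀ j, coeff j B = coeff j A := by
      intro j
      induction j using Nat.strong_induction_on with
      | _ j ih =>
        rcases Nat.lt_or_ge j 2 with hj | hj
        · interval_cases j
          · rw [coeff_zero_eq_constantCoeff, hB0, hA0]
          · rw [hB1, hA1]
        · have hdvd : (X : PowerSeries ℚ) ^ j ∣ B - A := by
            rw [agree_iff]; exact fun i hi => ih i hi
          have hkey := iter_key hj hB0 hB1 hA0 hA1 hdvd k
          rw [hBit, hAit] at hkey
          have : (k : ℚ) * coeff j B = (k : ℚ) * coeff j A := by linarith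
          exact mul_left_cancel₀ hkQ this
  ext j
  exact key j

theorem stmt_15 (F : PowerSeries ℚ) (hF0 : constantCoeff F = 0)
    (hF1 : coeff 1 F = 1) (n : ℕ) :
    ∃! A : PowerSeries ℚ,
      constantCoeff A = 0 ∧ coeff 1 A = 1 ∧ PSIter A (2 ^ n) = F :=
  psroot F hF0 hF1 (2 ^ n) Nat.one_le_two_pow
end
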